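/- Let k be a field and R a commutative ring with an ℕ-grading 𝒜 : ℕ → Submodule k R making R a graded k-algebra with 𝒜 0 = k·1 (the image of k in R). Suppose there exists a strictly increasing chain of prime ideals 𝔭₀ ⊊ 𝔭₁ ⊊ ⋯ ⊊ 𝔭_r of R of length r. Then there exists a strictly increasing chain of homogeneous prime ideals of R of length at least ⌊r/2⌋. In particular, ⌊dim(R)/2⌋ ≤ dim^gr(R) ≤ dim(R), including the case dim(R) = ∞. -/

import Mathlib

open DirectSum

namespace StmtAux

open scoped Classical

variable {k R : Type*} [Field k] [CommRing R] [Algebra k R]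
variable (𝒜 : ℕ → Submodule k R) [GradedAlgebra 𝒜]

/-- The `i`-th homogeneous component of `x`, as an element of `R`. -/
noncomputable def gc (x : R) (i : ℕ) : R := (DirectSum.decompose 𝒜 x i : R)

variable (P : Ideal R)

/-- The "reduced support" of `x` modulo `P`. -/
def Rset (x : R) : Set ℕ := {i | gc 𝒜 x i ∉ P}

lemma gc_mem_of_mem (hP : P.IsHomogeneous 𝒜) {x : R} (hx : x ∈ P) (i : ℕ) :
    gc 𝒜 x i ∈ P := hP i hx

lemma gc_sub (x y : R) (i : ℕ) : gc 𝒜 (x - y) i = gc 𝒜 x i - gc 𝒜 y i := by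
  simp [gc, map_sub]

lemma gc_mem_A (x : R) (i : ℕ) : gc 𝒜 x i ∈ 𝒜 i := (DirectSum.decompose 𝒜 x i).2

lemma gc_of_mem_same {x : R} {i : ℕ} (hx : x ∈ 𝒜 i) : gc 𝒜 x i = x :=
  DirectSum.decompose_of_mem_same 𝒜 hx

lemma gc_of_mem_ne {x : R} {i j : ℕ} (hx : x ∈ 𝒜 i) (hij : i ≠ j) : gc 𝒜 x j = 0 :=
  DirectSum.decompose_of_mem_ne 𝒜 hx hij

lemma mem_of_forall_gc {x : R} (h : ∀ i, gc 𝒜 x i ∈ P) : x ∈ P := by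
  rw [← DirectSum.sum_support_decompose 𝒜 x]
  exact Ideal.sum_mem _ fun i _ => h i

lemma Rset_nonempty {x : R} (hx : x ∉ P) : (Rset 𝒜 P x).Nonempty := by
  by_contra h
  rw [Set.not_nonempty_iff_eq_empty] at h
  refine hx (mem_of_forall_gc 𝒜 P fun i => ?_)
  by_contra hi
  exact (Set.eq_empty_iff_forall_notMem.mp h i) hi

lemma Rset_bddAbove (x : R) : BddAbove (Rset 𝒜 P x) := by
  refine (Set.Finite.subset (DirectSum.decompose 𝒜 x).support.finite_toSet ?_).bddAbove
  intro i hi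
  simp only [Finset.mem_coe, DFinsupp.mem_support_iff]
  intro h0
  apply hi
  show gc 𝒜 x i ∈ P
  rw [gc, h0, ZeroMemClass.coe_zero]
  exact P.zero_mem

/-- top reduced degree -/
noncomputable def rtop (x : R) : ℕ := sSup (Rset 𝒜 P x)
/-- bottom reduced degree -/
noncomputable def rbot (x : R) : ℕ := sInf (Rset 𝒜 P x)
/-- reduced span -/
noncomputable def rspan (x : R) : ℕ := rtop 𝒜 P x - rbot 𝒜 P x

variable {𝒜 P}

lemma gc_rtop_not_mem {x : R} (hx : x ∉ P) : gc 𝒜 x (rtop 𝒜 P x) ∉ P :=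
  Nat.sSup_mem (Rset_nonempty 𝒜 P hx) (Rset_bddAbove 𝒜 P x)

lemma gc_rbot_not_mem {x : R} (hx : x ∉ P) : gc 𝒜 x (rbot 𝒜 P x) ∉ P :=
  Nat.sInf_mem (Rset_nonempty 𝒜 P hx)

lemma gc_mem_of_rtop_lt {x : R} {i : ℕ} (hi : rtop 𝒜 P x < i) : gc 𝒜 x i ∈ P := by
  by_contra h
  exact absurd (le_csSup (Rset_bddAbove 𝒜 P x) (h : i ∈ Rset 𝒜 P x)) (not_le.mpr hi)

lemma gc_mem_of_lt_rbot {x : R} {i : ℕ} (hi : i < rbot 𝒜 P x) : gc 𝒜 x i ∈ P := by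
  by_contra h
  exact absurd (Nat.sInf_le (h : i ∈ Rset 𝒜 P x)) (not_le.mpr hi)

lemma rbot_le_rtop {x : R} (hx : x ∉ P) : rbot 𝒜 P x ≤ rtop 𝒜 P x := by
  by_contra h
  exact gc_rbot_not_mem hx (gc_mem_of_rtop_lt (not_le.mp h))

lemma not_mem_of_gc_not_mem {x : R} {i : ℕ} (hP : P.IsHomogeneous 𝒜)
    (h : gc 𝒜 x i ∉ P) : x ∉ P := fun hx => h (gc_mem_of_mem 𝒜 P hP hx i)

lemma rtop_eq_of {x : R} {t : ℕ} (h1 : gc 𝒜 x t ∉ P) (h2 : ∀ i, t < i → gc 𝒜 x i ∈ P) :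
    rtop 𝒜 P x = t := by
  have hne : (Rset 𝒜 P x).Nonempty := ⟨t, h1⟩
  refine le_antisymm ?_ (le_csSup (Rset_bddAbove 𝒜 P x) (h1 : t ∈ Rset 𝒜 P x))
  by_contra h
  exact (Nat.sSup_mem hne (Rset_bddAbove 𝒜 P x)) (h2 _ (not_le.mp h))

lemma rbot_eq_of {x : R} {t : ℕ} (h1 : gc 𝒜 x t ∉ P) (h2 : ∀ i, i < t → gc 𝒜 x i ∈ P) :
    rbot 𝒜 P x = t := by
  have hne : (Rset 𝒜 P x).Nonempty := ⟨t, h1⟩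
  refine le_antisymm (Nat.sInf_le (h1 : t ∈ Rset 𝒜 P x)) ?_
  by_contra h
  exact (Nat.sInf_mem hne) (h2 _ (not_le.mp h))

lemma gc_mul_eq_sum (x y : R) (n : ℕ) :
    gc 𝒜 (x * y) n =
      ∑ ij ∈ ((DirectSum.decompose 𝒜 x).support ×ˢ (DirectSum.decompose 𝒜 y).support).filter
        (fun ij : ℕ × ℕ => ij.1 + ij.2 = n), gc 𝒜 x ij.1 * gc 𝒜 y ij.2 := by
  rw [gc, DirectSum.decompose_mul, DirectSum.coe_mul_apply 𝒜]
  rfl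

lemma gc_mul_mem {x y : R} {n : ℕ}
    (h : ∀ i j, i + j = n → gc 𝒜 x i * gc 𝒜 y j ∈ P) : gc 𝒜 (x * y) n ∈ P := by
  rw [gc_mul_eq_sum]
  refine Ideal.sum_mem _ fun ij hij => ?_
  rw [Finset.mem_filter] at hij
  exact h ij.1 ij.2 hij.2

lemma gc_mul_key {x y : R} {t u : ℕ}
    (h : ∀ i j, i + j = t + u → ¬(i = t ∧ j = u) → gc 𝒜 x i * gc 𝒜 y j ∈ P) :
    gc 𝒜 (x * y) (t + u) - gc 𝒜 x t * gc 𝒜 y u ∈ P := by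
  rw [gc_mul_eq_sum]
  by_cases hmem : (t, u) ∈ ((DirectSum.decompose 𝒜 x).support ×ˢ
      (DirectSum.decompose 𝒜 y).support).filter (fun ij : ℕ × ℕ => ij.1 + ij.2 = t + u)
  · rw [← Finset.add_sum_erase _ _ hmem, add_sub_cancel_left]
    refine Ideal.sum_mem _ fun ij hij => ?_
    rw [Finset.mem_erase, Finset.mem_filter] at hij
    refine h ij.1 ij.2 hij.2.2 fun hc => hij.1 ?_
    exact Prod.ext hc.1 hc.2
  · have h0 : gc 𝒜 x t * gc 𝒜 y u = 0 := by
      rw [Finset.mem_filter, Finset.mem_product] at hmem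
      push_neg at hmem
      by_cases ht : (DirectSum.decompose 𝒜 x) t = 0
      · rw [gc, ht, ZeroMemClass.coe_zero, zero_mul]
      · by_cases hu : (DirectSum.decompose 𝒜 y) u = 0
        · rw [gc, gc, hu, ZeroMemClass.coe_zero, mul_zero]
        · exact absurd rfl (hmem ⟨DFinsupp.mem_support_iff.mpr ht,
            DFinsupp.mem_support_iff.mpr hu⟩)
    rw [h0, sub_zero]
    refine Ideal.sum_mem _ fun ij hij => ?_
    rw [Finset.mem_filter] at hij
    refine h ij.1 ij.2 hij.2 fun hc => hmem ?_
    obtain ⟨h1, h2⟩ := hc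
    subst h1; subst h2
    exact Finset.mem_filter.mpr hij

lemma gc_homog_mul {a : R} {d : ℕ} (ha : a ∈ 𝒜 d) (y : R) (j : ℕ) :
    gc 𝒜 (a * y) (d + j) = a * gc 𝒜 y j := by
  rw [gc, DirectSum.decompose_mul, DirectSum.decompose_of_mem 𝒜 ha,
    DirectSum.coe_of_mul_apply_add]
  rfl

lemma gc_homog_mul_of_lt {a : R} {d : ℕ} (ha : a ∈ 𝒜 d) (y : R) {n : ℕ} (hn : n < d) :
    gc 𝒜 (a * y) n = 0 := by
  rw [gc, DirectSum.decompose_mul, DirectSum.decompose_of_mem 𝒜 ha,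
    DirectSum.coe_of_mul_apply_of_not_le _ _ _ _ (by omega)]

section Prime

variable (hP : P.IsPrime) (hPhom : P.IsHomogeneous 𝒜)
include hP hPhom

lemma mul_props {x y : R} (hx : x ∉ P) (hy : y ∉ P) :
    x * y ∉ P ∧ rtop 𝒜 P (x * y) = rtop 𝒜 P x + rtop 𝒜 P y ∧
      rbot 𝒜 P (x * y) = rbot 𝒜 P x + rbot 𝒜 P y := by
  set t := rtop 𝒜 P x
  set u := rtop 𝒜 P y
  set b := rbot 𝒜 P x
  set v := rbot 𝒜 P y
  have htop : gc 𝒜 (x * y) (t + u) ∉ P := by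
    intro hmem
    have hkey : gc 𝒜 (x * y) (t + u) - gc 𝒜 x t * gc 𝒜 y u ∈ P := by
      refine gc_mul_key fun i j hij hne => ?_
      rcases lt_trichotomy i t with h | h | h
      · exact Ideal.mul_mem_left _ _ (gc_mem_of_rtop_lt (show u < j by omega))
      · exact absurd ⟨h, by omega⟩ hne
      · exact Ideal.mul_mem_right _ _ (gc_mem_of_rtop_lt h)
    have : gc 𝒜 x t * gc 𝒜 y u ∈ P := by
      have := P.sub_mem hmem hkey
      simpa using this
    exact ((hP.mem_or_mem this).elim (gc_rtop_not_mem hx) (gc_rtop_not_mem hy))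
  have hbot : gc 𝒜 (x * y) (b + v) ∉ P := by
    intro hmem
    have hkey : gc 𝒜 (x * y) (b + v) - gc 𝒜 x b * gc 𝒜 y v ∈ P := by
      refine gc_mul_key fun i j hij hne => ?_
      rcases lt_trichotomy i b with h | h | h
      · exact Ideal.mul_mem_right _ _ (gc_mem_of_lt_rbot h)
      · exact absurd ⟨h, by omega⟩ hne
      · exact Ideal.mul_mem_left _ _ (gc_mem_of_lt_rbot (show j < v by omega))
    have : gc 𝒜 x b * gc 𝒜 y v ∈ P := by
      have := P.sub_mem hmem hkey
      simpa using this
    exact ((hP.mem_or_mem this).elim (gc_rbot_not_mem hx) (gc_rbot_not_mem hy))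
  refine ⟨not_mem_of_gc_not_mem hPhom htop, rtop_eq_of htop fun n hn => ?_,
    rbot_eq_of hbot fun n hn => ?_⟩
  · refine gc_mul_mem fun i j hij => ?_
    rcases le_or_gt i t with h | h
    · exact Ideal.mul_mem_left _ _ (gc_mem_of_rtop_lt (show u < j by omega))
    · exact Ideal.mul_mem_right _ _ (gc_mem_of_rtop_lt h)
  · refine gc_mul_mem fun i j hij => ?_
    rcases le_or_gt b i with h | h
    · exact Ideal.mul_mem_left _ _ (gc_mem_of_lt_rbot (show j < v by omega))
    · exact Ideal.mul_mem_right _ _ (gc_mem_of_lt_rbot h)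

lemma homog_props {a : R} {d : ℕ} (ha : a ∈ 𝒜 d) (haP : a ∉ P) :
    rtop 𝒜 P a = d ∧ rbot 𝒜 P a = d := by
  have h1 : gc 𝒜 a d ∉ P := by rwa [gc_of_mem_same 𝒜 ha]
  constructor
  · refine rtop_eq_of h1 fun i hi => ?_
    rw [gc_of_mem_ne 𝒜 ha (by omega)]; exact P.zero_mem
  · refine rbot_eq_of h1 fun i hi => ?_
    rw [gc_of_mem_ne 𝒜 ha (by omega)]; exact P.zero_mem

lemma pow_props {g : R} (hg : g ∉ P) (m : ℕ) :
    g ^ m ∉ P ∧ rtop 𝒜 P (g ^ m) = m * rtop 𝒜 P g ∧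
      rbot 𝒜 P (g ^ m) = m * rbot 𝒜 P g := by
  induction m with
  | zero =>
    have h1 : (1 : R) ∉ P := (Ideal.ne_top_iff_one _).mp hP.ne_top
    have := homog_props hP hPhom (SetLike.GradedOne.one_mem (A := 𝒜)) h1
    simpa using ⟨h1, this.1, this.2⟩
  | succ n ih =>
    have := mul_props hP hPhom ih.1 hg
    rw [← pow_succ] at this
    refine ⟨this.1, ?_, ?_⟩
    · rw [this.2.1, ih.2.1]; ring
    · rw [this.2.2, ih.2.2]; ring

lemma span_congr {x y : R} (hxy : x - y ∈ P) :
    Rset 𝒜 P x = Rset 𝒜 P y := by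
  ext i
  have : gc 𝒜 x i - gc 𝒜 y i ∈ P := by
    rw [← gc_sub]; exact gc_mem_of_mem 𝒜 P hPhom hxy i
  constructor
  · intro hx hy
    exact hx (by simpa using P.add_mem this hy)
  · intro hy hx
    exact hy (by simpa using P.sub_mem hx this)

lemma division {s : Ideal R} (hPs : P ≤ s)
    {δ : ℕ} (hδ1 : 1 ≤ δ) (hδ : ∀ w ∈ s, w ∉ P → δ ≤ rspan 𝒜 P w)
    {x : R} (hxs : x ∈ s) (hxP : x ∉ P) (hxspan : rspan 𝒜 P x = δ) :
    ∀ y ∈ s, ∃ N : ℕ, gc 𝒜 x (rtop 𝒜 P x) ^ N * y ∈ Ideal.span {x} ⊔ P := by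
  suffices H : ∀ n : ℕ, ∀ y ∈ s, rspan 𝒜 P y ≤ n →
      ∃ N : ℕ, gc 𝒜 x (rtop 𝒜 P x) ^ N * y ∈ Ideal.span {x} ⊔ P by
    exact fun y hy => H (rspan 𝒜 P y) y hy le_rfl
  intro n
  induction n using Nat.strong_induction_on with
  | _ n ih =>
  intro y hys hyn
  by_cases hyP : y ∈ P
  · exact ⟨0, by simpa using Ideal.mem_sup_right hyP⟩
  set t := rtop 𝒜 P x with ht
  set b := rbot 𝒜 P x with hb
  set u := rtop 𝒜 P y with hu
  set v := rbot 𝒜 P y with hv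
  have hbt : b ≤ t := rbot_le_rtop hxP
  have hvu : v ≤ u := rbot_le_rtop hyP
  have hyspan : δ ≤ u - v := hδ y hys hyP
  have hxspan' : t - b = δ := hxspan
  have hxt : gc 𝒜 x t ∉ P := gc_rtop_not_mem hxP
  have hxtA : gc 𝒜 x t ∈ 𝒜 t := gc_mem_A 𝒜 x t
  have hyuA : gc 𝒜 y u ∈ 𝒜 u := gc_mem_A 𝒜 y u
  set z := gc 𝒜 x t * y - gc 𝒜 y u * x with hz
  have hzs : z ∈ s := Ideal.sub_mem _ (Ideal.mul_mem_left _ _ hys) (Ideal.mul_mem_left _ _ hxs)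
  have claim1 : ∀ m, t + u ≤ m → gc 𝒜 z m ∈ P := by
    intro m hm
    rw [hz, gc_sub]
    rcases eq_or_lt_of_le hm with hm' | hm'
    · rw [← hm', gc_homog_mul hxtA, show t + u = u + t by omega, gc_homog_mul hyuA]
      have : gc 𝒜 x t * gc 𝒜 y u - gc 𝒜 y u * gc 𝒜 x t = 0 := by ring
      rw [this]; exact P.zero_mem
    · refine P.sub_mem ?_ ?_
      · rw [show m = t + (m - t) by omega, gc_homog_mul hxtA]
        exact Ideal.mul_mem_left _ _ (gc_mem_of_rtop_lt (by omega))
      · rw [show m = u + (m - u) by omega, gc_homog_mul hyuA]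
        exact Ideal.mul_mem_left _ _ (gc_mem_of_rtop_lt (by omega))
  have claim2 : ∀ m, m < t + v → gc 𝒜 z m ∈ P := by
    intro m hm
    rw [hz, gc_sub]
    refine P.sub_mem ?_ ?_
    · rcases lt_or_ge m t with h | h
      · rw [gc_homog_mul_of_lt hxtA _ h]; exact P.zero_mem
      · rw [show m = t + (m - t) by omega, gc_homog_mul hxtA]
        exact Ideal.mul_mem_left _ _ (gc_mem_of_lt_rbot (by omega))
    · rcases lt_or_ge m u with h | h
      · rw [gc_homog_mul_of_lt hyuA _ h]; exact P.zero_mem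
      · rw [show m = u + (m - u) by omega, gc_homog_mul hyuA]
        exact Ideal.mul_mem_left _ _ (gc_mem_of_lt_rbot (by omega))
  have hxspan_mem : x ∈ Ideal.span {x} ⊔ P :=
    Ideal.mem_sup_left (Ideal.mem_span_singleton_self x)
  by_cases hzP : z ∈ P
  · refine ⟨1, ?_⟩
    have : gc 𝒜 x t ^ 1 * y = z + gc 𝒜 y u * x := by rw [hz]; ring
    rw [this]
    exact Submodule.add_mem _ (Ideal.mem_sup_right hzP)
      (Ideal.mem_sup_left (Ideal.mul_mem_left _ _ (Ideal.mem_span_singleton_self x)))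
  · have h1 : rtop 𝒜 P z < t + u := by
      by_contra h
      exact gc_rtop_not_mem hzP (claim1 _ (not_lt.mp h))
    have h2 : t + v ≤ rbot 𝒜 P z := by
      by_contra h
      exact gc_rbot_not_mem hzP (claim2 _ (not_le.mp h))
    have hzspan : rspan 𝒜 P z < rspan 𝒜 P y := by
      have : rspan 𝒜 P z = rtop 𝒜 P z - rbot 𝒜 P z := rfl
      have hy' : rspan 𝒜 P y = u - v := rfl
      omega
    obtain ⟨M, hM⟩ := ih (rspan 𝒜 P z) (by omega) z hzs le_rfl
    refine ⟨M + 1, ?_⟩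
    have : gc 𝒜 x t ^ (M + 1) * y =
        gc 𝒜 x t ^ M * z + (gc 𝒜 x t ^ M * gc 𝒜 y u) * x := by rw [hz]; ring
    rw [this]
    exact Submodule.add_mem _ hM
      (Ideal.mem_sup_left (Ideal.mul_mem_left _ _ (Ideal.mem_span_singleton_self x)))

lemma rspan_pos {s : Ideal R} (hPs : P ≤ s)
    (hcoreS : ∀ w : R, SetLike.IsHomogeneousElem 𝒜 w → w ∈ s → w ∈ P)
    {w : R} (hw : w ∈ s) (hwP : w ∉ P) : 1 ≤ rspan 𝒜 P w := by
  by_contra hcon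
  have hbt : rbot 𝒜 P w ≤ rtop 𝒜 P w := rbot_le_rtop hwP
  have heq : rtop 𝒜 P w = rbot 𝒜 P w := by
    have : rspan 𝒜 P w = rtop 𝒜 P w - rbot 𝒜 P w := rfl
    omega
  set u0 := rtop 𝒜 P w with hu0
  have hdiff : w - gc 𝒜 w u0 ∈ P := by
    refine mem_of_forall_gc 𝒜 P fun i => ?_
    rw [gc_sub]
    by_cases hi : i = u0
    · subst hi
      rw [gc_of_mem_same 𝒜 (gc_mem_A 𝒜 w u0), sub_self]
      exact P.zero_mem
    · rw [gc_of_mem_ne 𝒜 (gc_mem_A 𝒜 w u0) (Ne.symm hi), sub_zero]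
      rcases lt_or_ge u0 i with h | h
      · exact gc_mem_of_rtop_lt h
      · exact gc_mem_of_lt_rbot (by omega)
  have hmem : gc 𝒜 w u0 ∈ s := by
    have : gc 𝒜 w u0 = w - (w - gc 𝒜 w u0) := by ring
    rw [this]
    exact Ideal.sub_mem _ hw (hPs hdiff)
  exact (gc_rtop_not_mem hwP) (hcoreS _ ⟨u0, gc_mem_A 𝒜 w u0⟩ hmem)

end Prime

theorem no_three_chain {p q s : Ideal R} (hq : q.IsPrime) (hs : s.IsPrime)
    (hpq : p < q) (hqs : q < s)
    (hcore : (p.homogeneousCore 𝒜).toIdeal = (s.homogeneousCore 𝒜).toIdeal) : False := by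
  set P := (s.homogeneousCore 𝒜).toIdeal with hPdef
  have hP : P.IsPrime := hs.homogeneousCore
  have hPhom : P.IsHomogeneous 𝒜 := (s.homogeneousCore 𝒜).isHomogeneous
  have hPp : P ≤ p := hcore ▸ Ideal.toIdeal_homogeneousCore_le 𝒜 p
  have hPs : P ≤ s := Ideal.toIdeal_homogeneousCore_le 𝒜 s
  have hPq : P ≤ q := hPp.trans hpq.le
  have hcoreS : ∀ w : R, SetLike.IsHomogeneousElem 𝒜 w → w ∈ s → w ∈ P := fun w hw hws =>
    Ideal.mem_homogeneousCore_of_homogeneous_of_mem hw hws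
  obtain ⟨f, hfq, hfp⟩ := SetLike.exists_of_lt hpq
  have hfP : f ∉ P := fun h => hfp (hPp h)
  have hfs : f ∈ s := hqs.le hfq
  -- the minimal reduced span δ over `s`, achieved by `g`
  set T : Set ℕ := {m | ∃ w : R, w ∈ s ∧ w ∉ P ∧ rspan 𝒜 P w = m} with hT
  have hTne : T.Nonempty := ⟨rspan 𝒜 P f, f, hfs, hfP, rfl⟩
  obtain ⟨g, hgs, hgP, hgspan⟩ : ∃ w : R, w ∈ s ∧ w ∉ P ∧ rspan 𝒜 P w = sInf T :=
    Nat.sInf_mem hTne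
  set δ := sInf T with hδdef
  have hδ1 : 1 ≤ δ := hgspan ▸ rspan_pos hP hPhom hPs hcoreS hgs hgP
  have hδmin : ∀ w ∈ s, w ∉ P → δ ≤ rspan 𝒜 P w := fun w hw hwP =>
    Nat.sInf_le ⟨w, hw, hwP, rfl⟩
  have hgt : gc 𝒜 g (rtop 𝒜 P g) ∉ P := gc_rtop_not_mem hgP
  have hgtA : gc 𝒜 g (rtop 𝒜 P g) ∈ 𝒜 (rtop 𝒜 P g) := gc_mem_A 𝒜 g _
  have hgtq : gc 𝒜 g (rtop 𝒜 P g) ∉ q := fun h =>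
    hgt (hcoreS _ ⟨rtop 𝒜 P g, hgtA⟩ (hqs.le h))
  have div := division hP hPhom hPs hδ1 hδmin hgs hgP hgspan
  -- if `g ∈ q` we contradict `q < s`
  have caseA : g ∈ q → False := by
    intro hgq
    have hsub : Ideal.span {g} ⊔ P ≤ q :=
      sup_le ((Ideal.span_singleton_le_iff_mem _).mpr hgq) hPq
    have : s ≤ q := by
      intro y hy
      obtain ⟨N, hN⟩ := div y hy
      rcases hq.mem_or_mem (hsub hN) with h | h
      · exact absurd (hq.mem_of_pow_mem _ h) hgtq
      · exact h
    exact hqs.not_ge this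
  -- iteration
  have iter : ∀ m : ℕ, g ∈ q ∨ ∃ h : R, h ∈ q ∧ ∃ N : ℕ,
      gc 𝒜 g (rtop 𝒜 P g) ^ N * f - g ^ m * h ∈ P := by
    intro m
    induction m with
    | zero => exact Or.inr ⟨f, hfq, 0, by simpa using P.zero_mem⟩
    | succ m ihm =>
      rcases ihm with h | ⟨h, hhq, N, hcong⟩
      · exact Or.inl h
      obtain ⟨M, hM⟩ := div h (hqs.le hhq)
      obtain ⟨c, hc, w, hw, hcw⟩ := Submodule.mem_sup.mp hM
      obtain ⟨a, ha⟩ := Ideal.mem_span_singleton'.mp hc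
      have hag : a * g + w = gc 𝒜 g (rtop 𝒜 P g) ^ M * h := by rw [ha]; exact hcw
      have key : gc 𝒜 g (rtop 𝒜 P g) ^ (N + M) * f - g ^ (m + 1) * a ∈ P := by
        have e : gc 𝒜 g (rtop 𝒜 P g) ^ (N + M) * f - g ^ (m + 1) * a
            = gc 𝒜 g (rtop 𝒜 P g) ^ M * (gc 𝒜 g (rtop 𝒜 P g) ^ N * f - g ^ m * h)
              + g ^ m * w := by linear_combination (-(g ^ m)) * hag
        rw [e]
        exact P.add_mem (Ideal.mul_mem_left _ _ hcong) (Ideal.mul_mem_left _ _ hw)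
      have hmemq : g ^ (m + 1) * a ∈ q := by
        have h1 : gc 𝒜 g (rtop 𝒜 P g) ^ (N + M) * f ∈ q := Ideal.mul_mem_left _ _ hfq
        have := q.sub_mem h1 (hPq key)
        simpa using this
      rcases hq.mem_or_mem hmemq with h | h
      · exact Or.inl (hq.mem_of_pow_mem _ h)
      · exact Or.inr ⟨a, h, N + M, key⟩
  -- use the iteration with `m = rspan f + 1` to get a contradiction
  rcases iter (rspan 𝒜 P f + 1) with hgq | ⟨h, hhq, N, hcong⟩
  · exact caseA hgq
  set m := rspan 𝒜 P f + 1 with hm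
  by_cases hhP : h ∈ P
  · have : gc 𝒜 g (rtop 𝒜 P g) ^ N * f ∈ P := by
      have e : gc 𝒜 g (rtop 𝒜 P g) ^ N * f
          = (gc 𝒜 g (rtop 𝒜 P g) ^ N * f - g ^ m * h) + g ^ m * h := by ring
      rw [e]
      exact P.add_mem hcong (Ideal.mul_mem_left _ _ hhP)
    rcases hP.mem_or_mem this with h' | h'
    · exact hgt (hP.mem_of_pow_mem _ h')
    · exact hfP h'
  · -- compare reduced spans
    have hRset := span_congr hP hPhom hcong
    have htopeq : rtop 𝒜 P (gc 𝒜 g (rtop 𝒜 P g) ^ N * f) = rtop 𝒜 P (g ^ m * h) :=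
      congrArg sSup hRset
    have hboteq : rbot 𝒜 P (gc 𝒜 g (rtop 𝒜 P g) ^ N * f) = rbot 𝒜 P (g ^ m * h) :=
      congrArg sInf hRset
    -- left side
    have hgtNP : gc 𝒜 g (rtop 𝒜 P g) ^ N ∉ P := fun hh => hgt (hP.mem_of_pow_mem N hh)
    have hgtNA : gc 𝒜 g (rtop 𝒜 P g) ^ N ∈ 𝒜 (N • rtop 𝒜 P g) :=
      SetLike.pow_mem_graded N hgtA
    have hL := homog_props hP hPhom hgtNA hgtNP
    have hLm := mul_props hP hPhom hgtNP hfP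
    -- right side
    have hpow := pow_props hP hPhom hgP m
    have hRm := mul_props hP hPhom hpow.1 hhP
    have hbtf : rbot 𝒜 P f ≤ rtop 𝒜 P f := rbot_le_rtop hfP
    have hbth : rbot 𝒜 P h ≤ rtop 𝒜 P h := rbot_le_rtop hhP
    have hbtg : rbot 𝒜 P g ≤ rtop 𝒜 P g := rbot_le_rtop hgP
    have hspanf : rspan 𝒜 P f = rtop 𝒜 P f - rbot 𝒜 P f := rfl
    have hspang : rtop 𝒜 P g - rbot 𝒜 P g = δ := hgspan
    have e1 : rtop 𝒜 P (gc 𝒜 g (rtop 𝒜 P g) ^ N * f)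
        = N * rtop 𝒜 P g + rtop 𝒜 P f := by
      rw [hLm.2.1, hL.1, smul_eq_mul]
    have e2 : rbot 𝒜 P (gc 𝒜 g (rtop 𝒜 P g) ^ N * f)
        = N * rtop 𝒜 P g + rbot 𝒜 P f := by
      rw [hLm.2.2, hL.2, smul_eq_mul]
    have e3 : rtop 𝒜 P (g ^ m * h) = m * rtop 𝒜 P g + rtop 𝒜 P h := by
      rw [hRm.2.1, hpow.2.1]
    have e4 : rbot 𝒜 P (g ^ m * h) = m * rbot 𝒜 P g + rbot 𝒜 P h := by
      rw [hRm.2.2, hpow.2.2]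
    have hq1 : m * rbot 𝒜 P g + m * δ ≤ m * rtop 𝒜 P g := by
      have h' : rbot 𝒜 P g + δ ≤ rtop 𝒜 P g := by omega
      calc m * rbot 𝒜 P g + m * δ = m * (rbot 𝒜 P g + δ) := by ring
        _ ≤ m * rtop 𝒜 P g := Nat.mul_le_mul_left m h'
    have hq2 : m ≤ m * δ := Nat.le_mul_of_pos_right m hδ1
    omega

end StmtAux

/-- in an `ℕ`-graded algebra over a field `k` with degree-zero part `k·1`,
any strictly increasing chain of prime ideals of length `r` yields a strictly increasing
chain of *homogeneous* prime ideals of length at least `⌊r/2⌋`.  In particular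
`⌊dim R / 2⌋ ≤ dim^gr R ≤ dim R`. -/
theorem exists_homogeneous_chain_of_chain {k R : Type*} [Field k] [CommRing R] [Algebra k R]
    (𝒜 : ℕ → Submodule k R) [GradedAlgebra 𝒜] (h0 : 𝒜 0 = 1)
    (r : ℕ) (𝔭 : Fin (r + 1) → Ideal R) (hmono : StrictMono 𝔭)
    (hprime : ∀ i, (𝔭 i).IsPrime) :
    ∃ 𝔮 : Fin (r / 2 + 1) → Ideal R, StrictMono 𝔮 ∧
      (∀ i, (𝔮 i).IsPrime) ∧ (∀ i, (𝔮 i).IsHomogeneous 𝒜) := by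
  refine ⟨fun i => ((𝔭 ⟨2 * i.1, by have := i.2; omega⟩).homogeneousCore 𝒜).toIdeal, ?_, ?_, ?_⟩
  · rw [Fin.strictMono_iff_lt_succ]
    intro i
    have hi2 : 2 * i.1 + 2 < r + 1 := by have := i.2; omega
    set a : Fin (r + 1) := ⟨2 * i.1, by omega⟩ with ha
    set m : Fin (r + 1) := ⟨2 * i.1 + 1, by omega⟩ with hm
    set b : Fin (r + 1) := ⟨2 * i.1 + 2, by omega⟩ with hb
    have hab : 𝔭 a ≤ 𝔭 b := (hmono (show a < b from Fin.mk_lt_mk.mpr (by omega))).le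
    have hle : ((𝔭 a).homogeneousCore 𝒜).toIdeal ≤ ((𝔭 b).homogeneousCore 𝒜).toIdeal :=
      Ideal.homogeneousCore'_mono 𝒜 hab
    have hne : ((𝔭 a).homogeneousCore 𝒜).toIdeal ≠ ((𝔭 b).homogeneousCore 𝒜).toIdeal := by
      intro hcon
      exact StmtAux.no_three_chain (hprime m) (hprime b)
        (hmono (show a < m from Fin.mk_lt_mk.mpr (by omega)))
        (hmono (show m < b from Fin.mk_lt_mk.mpr (by omega))) hcon
    have : (Fin.castSucc i).1 = i.1 := rfl
    have hsucc : (i.succ).1 = i.1 + 1 := rfl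
    exact lt_of_le_of_ne (by convert hle using 3 <;> simp [Fin.coe_castSucc, Fin.val_succ, ha, hb, Nat.mul_add])
      (by convert hne using 3 <;> simp [Fin.coe_castSucc, Fin.val_succ, Nat.mul_add, ha, hb])
  · exact fun i => (hprime _).homogeneousCore
  · exact fun i => HomogeneousIdeal.isHomogeneous _
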